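/- Let R = X × Y ⊆ {0,1}^I × {0,1}^I be a combinatorial rectangle, i ∈ I, and suppose R ∩ D_i^I = ∅, where D_i^I := {(x,y) : x ∧ y = e_i}. Then for every (x', y') ∈ {0,1}^{I∖{i}} × {0,1}^{I∖{i}} with x' ∧ y' = 0, the number of extensions (x, y) ∈ R with x ∧ y = 0^I, x restricted to I∖{i} equals x', and y restricted to I∖{i} equals y', is at most 2. -/

import Mathlib

open Finset

theorem stmt_11 {I : Type*} [Fintype I] [DecidableEq I]
    (X Y : Finset (I → Bool)) (i : I)
    (hdisj : ∀ x ∈ X, ∀ y ∈ Y, ¬ (∀ j, (x j = true ∧ y j = true) ↔ j = i))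
    (x' y' : {j : I // j ≠ i} → Bool) (h' : ∀ j, ¬(x' j = true ∧ y' j = true)) :
    ((X ×ˢ Y).filter (fun p =>
        (∀ j, ¬(p.1 j = true ∧ p.2 j = true)) ∧
        (∀ j : {j : I // j ≠ i}, p.1 j.1 = x' j ∧ p.2 j.1 = y' j))).card ≤ 2 := by
  set S := ((X ×ˢ Y).filter (fun p =>
        (∀ j, ¬(p.1 j = true ∧ p.2 j = true)) ∧
        (∀ j : {j : I // j ≠ i}, p.1 j.1 = x' j ∧ p.2 j.1 = y' j))) with hS
  have hmem : ∀ p ∈ S, p.1 ∈ X ∧ p.2 ∈ Y ∧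
      (∀ j, ¬(p.1 j = true ∧ p.2 j = true)) ∧
      (∀ j : {j : I // j ≠ i}, p.1 j.1 = x' j ∧ p.2 j.1 = y' j) := by
    intro p hp
    rw [hS, mem_filter, mem_product] at hp
    exact ⟨hp.1.1, hp.1.2, hp.2.1, hp.2.2⟩
  -- extensionality: elements of S are determined by their values at i
  have hext : ∀ p ∈ S, ∀ q ∈ S, p.1 i = q.1 i → p.2 i = q.2 i → p = q := by
    intro p hp q hq h1 h2
    obtain ⟨_, _, _, hp4⟩ := hmem p hp
    obtain ⟨_, _, _, hq4⟩ := hmem q hq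
    refine Prod.ext (funext fun j => ?_) (funext fun j => ?_)
    · by_cases hj : j = i
      · subst hj; exact h1
      · exact (hp4 ⟨j, hj⟩).1.trans (hq4 ⟨j, hj⟩).1.symm
    · by_cases hj : j = i
      · subst hj; exact h2
      · exact (hp4 ⟨j, hj⟩).2.trans (hq4 ⟨j, hj⟩).2.symm
  -- cannot have one with x i = true and another with y i = true
  have hno : ∀ p ∈ S, ∀ q ∈ S, p.1 i = true → q.2 i = true → False := by
    intro p hp q hq h1 h2
    obtain ⟨hpX, _, _, hp4⟩ := hmem p hp
    obtain ⟨_, hqY, _, hq4⟩ := hmem q hq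
    refine hdisj p.1 hpX q.2 hqY fun j => ⟨fun h => ?_, fun h => ?_⟩
    · by_contra hj
      exact h' ⟨j, hj⟩ ⟨(hp4 ⟨j, hj⟩).1 ▸ h.1, (hq4 ⟨j, hj⟩).2 ▸ h.2⟩
    · subst h; exact ⟨h1, h2⟩
  by_cases hcase : ∃ p ∈ S, p.1 i = true
  · obtain ⟨r, hr, hri⟩ := hcase
    -- all elements have p.2 i = false, so determined by p.1 i
    have key : Set.InjOn (fun p : (I → Bool) × (I → Bool) => p.1 i) S := by
      intro p hp q hq h
      have hp2 : p.2 i = false := by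
        by_contra h'; exact hno r hr p hp hri (Bool.eq_true_of_not_eq_false h')
      have hq2 : q.2 i = false := by
        by_contra h'; exact hno r hr q hq hri (Bool.eq_true_of_not_eq_false h')
      exact hext p hp q hq h (hp2.trans hq2.symm)
    calc S.card = (S.image (fun p => p.1 i)).card := (card_image_of_injOn key).symm
      _ ≤ (Finset.univ : Finset Bool).card := card_le_card (subset_univ _)
      _ = 2 := by simp
  · push_neg at hcase
    have key : Set.InjOn (fun p : (I → Bool) × (I → Bool) => p.2 i) S := by
      intro p hp q hq h
      have hp1 : p.1 i = false := by
        by_contra h'; exact hcase p hp (Bool.eq_true_of_not_eq_false h')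
      have hq1 : q.1 i = false := by
        by_contra h'; exact hcase q hq (Bool.eq_true_of_not_eq_false h')
      exact hext p hp q hq (hp1.trans hq1.symm) h
    calc S.card = (S.image (fun p => p.2 i)).card := (card_image_of_injOn key).symm
      _ ≤ (Finset.univ : Finset Bool).card := card_le_card (subset_univ _)
      _ = 2 := by simp
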